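/- Let X be a path-connected topological space and let Y be a locally path-connected topological space. The map that sends a continuous map g : Y → P(X) to the same underlying function viewed as a continuous map Y → X induces a well-defined bijection from the set of homotopy classes of continuous maps Y → P(X) to the set of homotopy classes of continuous maps Y → X. -/

import Mathlib

open TopologicalSpace

/-- The Peano topology on `X`: generated by all path components of all open subsets. -/
def peanoTopology (X : Type*) [TopologicalSpace X] : TopologicalSpace X :=
  TopologicalSpace.generateFrom
    {C | ∃ (U : Set X) (x : X), IsOpen U ∧ x ∈ U ∧ C = pathComponentIn U x}

/-- The universal Peano space of `X`: the same underlying set with the Peano topology. -/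
def Peanify (X : Type*) [TopologicalSpace X] : Type _ := X

instance (X : Type*) [TopologicalSpace X] : TopologicalSpace (Peanify X) :=
  peanoTopology X

/-- The universal Peano map `P(X) → X` (the identity on underlying sets), as a
continuous map. -/
def ofPeanifyCM (X : Type*) [TopologicalSpace X] : C(Peanify X, X) where
  toFun := fun x => (x : X)
  continuous_toFun := by
    refine continuous_def.mpr ?_
    intro U hU
    show TopologicalSpace.GenerateOpen _ U
    have hrw : U = ⋃₀ {C : Set X | ∃ x ∈ U, C = pathComponentIn U x} := by
      ext y
      constructor
      · intro hy
        exact ⟨pathComponentIn U y, ⟨y, hy, rfl⟩, mem_pathComponentIn_self hy⟩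
      · rintro ⟨C, ⟨x, hx, rfl⟩, hy⟩
        exact pathComponentIn_subset hy
    rw [hrw]
    apply TopologicalSpace.GenerateOpen.sUnion
    rintro C ⟨x, hx, rfl⟩
    exact TopologicalSpace.GenerateOpen.basic _ ⟨U, x, hU, hx, rfl⟩

lemma isPathConnected_prod' {A B : Type*} [TopologicalSpace A] [TopologicalSpace B]
    {s : Set A} {t : Set B} (hs : IsPathConnected s) (ht : IsPathConnected t) :
    IsPathConnected (s ×ˢ t) := by
  obtain ⟨a, ha, hsa⟩ := hs
  obtain ⟨b, hb, htb⟩ := ht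
  refine ⟨(a, b), ⟨ha, hb⟩, ?_⟩
  rintro ⟨x, y⟩ ⟨hx, hy⟩
  obtain ⟨γ₁, hγ₁⟩ := hsa hx
  obtain ⟨γ₂, hγ₂⟩ := htb hy
  exact ⟨γ₁.prod γ₂, fun u => ⟨hγ₁ u, hγ₂ u⟩⟩

instance instLocPathConnectedProd' {A B : Type*} [TopologicalSpace A] [TopologicalSpace B]
    [LocallyPathConnectedSpace A] [LocallyPathConnectedSpace B] : LocallyPathConnectedSpace (A × B) :=
  .of_bases (fun x => (path_connected_basis x.1).prod_nhds (path_connected_basis x.2))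
    (fun _ _ hp => isPathConnected_prod' hp.1.2 hp.2.2)

instance : LocallyPathConnectedSpace unitInterval := by
  refine .of_bases (fun x => Metric.nhds_basis_ball) fun x r hr => ?_
  rw [Topology.IsInducing.subtypeVal.isPathConnected_iff]
  have h1 : (Subtype.val '' (Metric.ball x r) : Set ℝ)
      = Set.Icc (0:ℝ) 1 ∩ Metric.ball (x : ℝ) r := by
    ext y
    simp only [Set.mem_image, Metric.mem_ball, Set.mem_inter_iff, Set.mem_Icc]
    constructor
    · rintro ⟨z, hz, rfl⟩
      exact ⟨⟨z.2.1, z.2.2⟩, by rwa [Subtype.dist_eq] at hz⟩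
    · rintro ⟨hy, hd⟩
      exact ⟨⟨y, hy.1, hy.2⟩, by rwa [Subtype.dist_eq], rfl⟩
  rw [h1]
  exact ((convex_Icc (0:ℝ) 1).inter (convex_ball _ _)).isPathConnected
    ⟨x, ⟨x.2.1, x.2.2⟩, Metric.mem_ball_self hr⟩

lemma continuous_peanify {Z X : Type*} [TopologicalSpace Z] [TopologicalSpace X]
    [LocallyPathConnectedSpace Z] {f : Z → X} (hf : Continuous f) :
    Continuous (X := Z) (Y := Peanify X) f := by
  apply continuous_generateFrom_iff.mpr
  rintro C ⟨U, x, hU, hx, rfl⟩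
  rw [isOpen_iff_mem_nhds]
  intro z hz
  have hz' : f z ∈ U := pathComponentIn_subset hz
  have h1 : IsOpen (pathComponentIn (f ⁻¹' U) z) := (hU.preimage hf).pathComponentIn _
  refine Filter.mem_of_superset (h1.mem_nhds (mem_pathComponentIn_self hz')) fun w hw => ?_
  have : JoinedIn U (f z) (f w) := (hw.map hf).mono (Set.image_preimage_subset f U)
  exact pathComponentIn_congr hz ▸ this

/-- for `X` path connected and `Y` locally path connected, composition with
the universal Peano map induces a bijection `[Y, P(X)] → [Y, X]` on homotopy classes. -/
theorem peanify_homotopyClasses_bijective (X Y : Type*) [TopologicalSpace X]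
    [TopologicalSpace Y] [PathConnectedSpace X] [LocallyPathConnectedSpace Y] :
    Function.Bijective
      (Quot.map (fun g : C(Y, Peanify X) => (ofPeanifyCM X).comp g)
        (fun _ _ h => ContinuousMap.Homotopic.comp (ContinuousMap.Homotopic.refl _) h) :
        Quot (ContinuousMap.Homotopic (X := Y) (Y := Peanify X)) →
          Quot (ContinuousMap.Homotopic (X := Y) (Y := X))) := by
  constructor
  · intro a b h
    induction a using Quot.ind with | _ f => ?_
    induction b using Quot.ind with | _ g => ?_
    have h' : ContinuousMap.Homotopic ((ofPeanifyCM X).comp f) ((ofPeanifyCM X).comp g) :=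
      (ContinuousMap.Homotopic.equivalence.eqvGen_iff).mp (Quot.eq.mp h)
    obtain ⟨H⟩ := h'
    refine Quot.sound ⟨{
      toFun := fun p => (H p : Peanify X)
      continuous_toFun := continuous_peanify H.continuous
      map_zero_left := fun y => H.apply_zero y
      map_one_left := fun y => H.apply_one y }⟩
  · intro b
    induction b using Quot.ind with | _ f => ?_
    exact ⟨Quot.mk _ ⟨f, continuous_peanify f.continuous⟩,
      congrArg (Quot.mk _) (ContinuousMap.ext fun y => rfl)⟩
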